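/- Let A : ℝ^r → Matrix (Fin n) (Fin n) ℝ be a smooth map with A x symmetric for every x, let V : ℝ^r → ℝ^r be a smooth vector field belonging to L𝒟_A witnessed by a smooth map U : ℝ^r → Matrix (Fin n) (Fin n) ℝ, and let X : ℝ^r → Matrix (Fin n) (Fin n) ℝ be a smooth map such that X x is invertible for every x. Define B : ℝ^r → Matrix (Fin n) (Fin n) ℝ by B x = (X x)ᵀ * A x * (X x), and define C : ℝ^r → Matrix (Fin n) (Fin n) ℝ by C x = (X x)⁻¹ * (fderiv ℝ X x)(V x) + (X x)⁻¹ * (U x) * (X x). Then for every x, (fderiv ℝ B x)(V x) = (C x)ᵀ * B x + B x * (C x); in particular V belongs to L𝒟_B. -/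

import Mathlib

attribute [local instance] Matrix.normedAddCommGroup Matrix.normedSpace

open scoped Matrix

/-- If a smooth vector field `V` belongs to `L𝒟_A` (witnessed by a smooth `U`) and `X` is a
smooth invertible-matrix-valued map, then `V` belongs to `L𝒟_B` where `B = Xᵀ A X`,
witnessed by `C = X⁻¹ dX(V) + X⁻¹ U X`. -/
theorem lieAlgebra_isotropy_congr {r n : ℕ}
    (A : (Fin r → ℝ) → Matrix (Fin n) (Fin n) ℝ)
    (hA : ContDiff ℝ (⊤ : ℕ∞) A) (hAsymm : ∀ x, (A x).IsSymm)
    (V : (Fin r → ℝ) → (Fin r → ℝ)) (hV : ContDiff ℝ (⊤ : ℕ∞) V)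
    (U : (Fin r → ℝ) → Matrix (Fin n) (Fin n) ℝ) (hU : ContDiff ℝ (⊤ : ℕ∞) U)
    (hVU : ∀ x, fderiv ℝ A x (V x) = (U x)ᵀ * A x + A x * U x)
    (X : (Fin r → ℝ) → Matrix (Fin n) (Fin n) ℝ) (hX : ContDiff ℝ (⊤ : ℕ∞) X)
    (hXinv : ∀ x, IsUnit (X x))
    (B C : (Fin r → ℝ) → Matrix (Fin n) (Fin n) ℝ)
    (hB : ∀ x, B x = (X x)ᵀ * A x * X x)
    (hC : ∀ x, C x = (X x)⁻¹ * fderiv ℝ X x (V x) + (X x)⁻¹ * U x * X x) :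
    ∀ x, fderiv ℝ B x (V x) = (C x)ᵀ * B x + B x * C x := by
  classical
  intro x
  -- matrix multiplication is a bounded bilinear map
  have hmul : IsBoundedBilinearMap ℝ
      (fun p : Matrix (Fin n) (Fin n) ℝ × Matrix (Fin n) (Fin n) ℝ => p.1 * p.2) := by
    let L1 : Matrix (Fin n) (Fin n) ℝ →ₗ[ℝ]
        (Matrix (Fin n) (Fin n) ℝ →L[ℝ] Matrix (Fin n) (Fin n) ℝ) :=
      { toFun := fun a => LinearMap.toContinuousLinearMap (LinearMap.mulLeft ℝ a)
        map_add' := fun a b => by ext c; simp [add_mul]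
        map_smul' := fun s a => by ext c; simp [smul_mul_assoc] }
    exact (LinearMap.toContinuousLinearMap L1).isBoundedBilinearMap
  -- transpose as a continuous linear map
  let T : Matrix (Fin n) (Fin n) ℝ →L[ℝ] Matrix (Fin n) (Fin n) ℝ :=
    LinearMap.toContinuousLinearMap
      (Matrix.transposeLinearEquiv (Fin n) (Fin n) ℝ ℝ).toLinearMap
  have hTapp : ∀ M : Matrix (Fin n) (Fin n) ℝ, T M = Mᵀ := fun _ => rfl
  have hAd : HasFDerivAt A (fderiv ℝ A x) x :=
    ((hA.differentiable (by simp)) x).hasFDerivAt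
  have hXd : HasFDerivAt X (fderiv ℝ X x) x :=
    ((hX.differentiable (by simp)) x).hasFDerivAt
  have h1 : HasFDerivAt (fun y => (X y)ᵀ) (T.comp (fderiv ℝ X x)) x :=
    T.hasFDerivAt.comp x hXd
  have h2 : HasFDerivAt (fun y => (X y)ᵀ * A y)
      ((hmul.deriv ((X x)ᵀ, A x)).comp ((T.comp (fderiv ℝ X x)).prod (fderiv ℝ A x))) x :=
    by have h := (hmul.hasFDerivAt ((X x)ᵀ, A x)).comp x (HasFDerivAt.prodMk h1 hAd); exact h
  have h3 : HasFDerivAt (fun y => ((X y)ᵀ * A y) * X y)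
      ((hmul.deriv ((X x)ᵀ * A x, X x)).comp
        (((hmul.deriv ((X x)ᵀ, A x)).comp
          ((T.comp (fderiv ℝ X x)).prod (fderiv ℝ A x))).prod (fderiv ℝ X x))) x :=
    by have h := (hmul.hasFDerivAt ((X x)ᵀ * A x, X x)).comp x (HasFDerivAt.prodMk h2 hXd); exact h
  have hBe : B = fun y => ((X y)ᵀ * A y) * X y := by
    funext y; rw [hB y, Matrix.mul_assoc, ← Matrix.mul_assoc]
  rw [hBe, show fderiv ℝ (fun y => ((X y)ᵀ * A y) * X y) x (V x) =
      ((hmul.deriv ((X x)ᵀ * A x, X x)).comp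
        (((hmul.deriv ((X x)ᵀ, A x)).comp
          ((T.comp (fderiv ℝ X x)).prod (fderiv ℝ A x))).prod (fderiv ℝ X x))) (V x) from by
    erw [HasFDerivAt.fderiv h3]; rfl]
  -- abbreviations
  set dX := fderiv ℝ X x (V x) with hdX
  have hdA : fderiv ℝ A x (V x) = (U x)ᵀ * A x + A x * U x := hVU x
  have hdet : IsUnit (X x).det := (Matrix.isUnit_iff_isUnit_det (X x)).mp (hXinv x)
  have hYX : (X x)⁻¹ * X x = 1 := Matrix.nonsing_inv_mul _ hdet
  have hXY : X x * (X x)⁻¹ = 1 := Matrix.mul_nonsing_inv _ hdet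
  have hYXc : ∀ Z : Matrix (Fin n) (Fin n) ℝ, ((X x)⁻¹)ᵀ * ((X x)ᵀ * Z) = Z := by
    intro Z
    rw [← Matrix.mul_assoc, ← Matrix.transpose_mul, hXY, Matrix.transpose_one, Matrix.one_mul]
  have hXYc : ∀ Z : Matrix (Fin n) (Fin n) ℝ, X x * ((X x)⁻¹ * Z) = Z := by
    intro Z
    rw [← Matrix.mul_assoc, hXY, Matrix.one_mul]
  have hAs : (A x)ᵀ = A x := hAsymm x
  simp only [ContinuousLinearMap.comp_apply, ContinuousLinearMap.prod_apply,
    IsBoundedBilinearMap.deriv_apply, hTapp, hC x, hB x, ← hdX, hdA,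
    Matrix.transpose_add, Matrix.transpose_mul, hAs]
  erw [ContinuousLinearMap.comp_apply, ContinuousLinearMap.prod_apply]
  simp only [ContinuousLinearMap.comp_apply, ContinuousLinearMap.prod_apply,
    IsBoundedBilinearMap.deriv_apply, hTapp, ← hdX, hdA]
  erw [hdA, ← hdX]
  simp only [Matrix.mul_add, Matrix.add_mul, Matrix.mul_assoc, hYXc, hXYc]
  abel
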